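/- Let k be a field and H a Hopf algebra over k with comultiplication Δ, counit ε and antipode S. Let F be a k-algebra that is also an H-module such that multiplication is H-equivariant, i.e. a·(fg) = Σ (a₍₁₎·f)(a₍₂₎·g) for all a ∈ H, f,g ∈ F (where Δ(a) = Σ a₍₁₎ ⊗ a₍₂₎), and a·1_F = ε(a)1_F. Let M be an F-bimodule that is also an H-module with a·(f m) = Σ (a₍₁₎·f)(a₍₂₎·m) and a·(m f) = Σ (a₍₁₎·m)(a₍₂₎·f) for all a ∈ H, f ∈ F, m in M. Let η : M → k be a k-linear invariant integral, i.e. η(a·m) = ε(a)η(m) for all a ∈ H, m ∈ M. Then for all a ∈ H, f ∈ F, ψ ∈ M: η((a·f)ψ) = η(f(S(a)·ψ)) and η((a·ψ)f) = η(ψ(S(a)·f)) (the formula of integration by parts). -/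

import Mathlib

open HopfAlgebra TensorProduct LinearMap

section aux
variable {k H : Type*} [Field k] [Ring H] [HopfAlgebra k H] {ι : Type*}

lemma aux_counit_right {a : H} (R : Coalgebra.Repr k a ι) :
    ∑ i ∈ R.index, Coalgebra.counit (R := k) (R.right i) • R.left i = a := by
  have h := Coalgebra.sum_tmul_counit_eq (R := k) R
  apply_fun (TensorProduct.rid k H) at h
  simp only [map_sum, LinearEquiv.coe_coe, TensorProduct.rid_tmul, one_smul] at h
  exact h

lemma aux_counit_left {a : H} (R : Coalgebra.Repr k a ι) :
    ∑ i ∈ R.index, Coalgebra.counit (R := k) (R.left i) • R.right i = a := by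
  have h := Coalgebra.sum_counit_tmul_eq (R := k) R
  apply_fun (TensorProduct.lid k H) at h
  simp only [map_sum, LinearEquiv.coe_coe, TensorProduct.lid_tmul, one_smul] at h
  exact h

lemma key_tensor {κ Λ : ι → Type*} {a : H} (R : Coalgebra.Repr k a ι)
    (R1 : ∀ i, Coalgebra.Repr k (R.left i) (κ i)) (R2 : ∀ i, Coalgebra.Repr k (R.right i) (Λ i)) :
    ∑ i ∈ R.index, ∑ j ∈ (R1 i).index,
      (R1 i).left j ⊗ₜ[k] ((R1 i).right j * antipode (R := k) (R.right i))
      = a ⊗ₜ[k] (1 : H) := by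
  have h := Coalgebra.sum_tmul_tmul_eq R R1 R2
  apply_fun LinearMap.lTensor H (LinearMap.mul' k H ∘ₗ LinearMap.lTensor H (antipode (R := k))) at h
  simp only [map_sum, LinearMap.lTensor_tmul, LinearMap.comp_apply, LinearMap.mul'_apply] at h
  rw [h]
  have h2 : ∀ i ∈ R.index,
      ∑ j ∈ (R2 i).index,
        R.left i ⊗ₜ[k] ((R2 i).left j * antipode (R := k) ((R2 i).right j))
      = Coalgebra.counit (R := k) (R.right i) • (R.left i ⊗ₜ[k] (1 : H)) := by
    intro i _
    rw [← TensorProduct.tmul_sum, HopfAlgebra.sum_mul_antipode_eq_smul, TensorProduct.tmul_smul]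
  rw [Finset.sum_congr rfl h2]
  simp only [TensorProduct.smul_tmul', ← TensorProduct.sum_tmul, aux_counit_right R]

/-- Re-index a representation by `ULift (Fin n)`, to land in an arbitrary universe. -/
noncomputable def reprFin.{w} {k A : Type*} [CommSemiring k] [AddCommMonoid A] [Module k A]
    [CoalgebraStruct k A] {a : A} {ι : Type*} (P : Coalgebra.Repr k a ι) :
    Coalgebra.Repr k a (ULift.{w} (Fin P.index.card)) where
  index := Finset.univ
  left := fun i => P.left (P.index.equivFin.symm i.down)
  right := fun i => P.right (P.index.equivFin.symm i.down)
  eq := by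
    rw [← P.eq, ← Finset.sum_coe_sort P.index (fun i => P.left i ⊗ₜ[k] P.right i)]
    exact Fintype.sum_equiv (Equiv.ulift.trans P.index.equivFin.symm) _ _ (fun i => rfl)

end aux

/-- Integration by parts for an invariant integral on a covariant bimodule `M` over a
covariant algebra `F`: `η((a·f)ψ) = η(f(S(a)·ψ))` and `η((a·ψ)f) = η(ψ(S(a)·f))`. -/
theorem integration_by_parts
    {k H F M : Type*} [Field k] [Ring H] [HopfAlgebra k H]
    [Ring F] [Algebra k F] [AddCommGroup M] [Module k M]
    -- the H-module structure on F
    (α : H →ₐ[k] Module.End k F)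
    -- covariance of the multiplication of F
    (hmul : ∀ (a : H) {ι : Type*} (repr : Coalgebra.Repr k a ι) (f g : F),
      α a (f * g) = ∑ i ∈ repr.index, α (repr.left i) f * α (repr.right i) g)
    -- the unit of F is invariant
    (hone : ∀ a : H, α a (1 : F) = Coalgebra.counit (R := k) a • (1 : F))
    -- the left and right F-module structures on M, making it an F-bimodule
    (l : F →ₐ[k] Module.End k M) (r : F →ₗ[k] Module.End k M)
    (hr_mul : ∀ f g : F, r (f * g) = r g * r f) (hr_one : r 1 = 1)
    (hcomm : ∀ f g : F, l f * r g = r g * l f)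
    -- the H-module structure on M
    (β : H →ₐ[k] Module.End k M)
    -- covariance of the left action F ⊗ M → M
    (hl_equiv : ∀ (a : H) {ι : Type*} (repr : Coalgebra.Repr k a ι) (f : F) (m : M),
      β a (l f m) = ∑ i ∈ repr.index, l (α (repr.left i) f) (β (repr.right i) m))
    -- covariance of the right action M ⊗ F → M
    (hr_equiv : ∀ (a : H) {ι : Type*} (repr : Coalgebra.Repr k a ι) (f : F) (m : M),
      β a (r f m) = ∑ i ∈ repr.index, r (α (repr.right i) f) (β (repr.left i) m))
    -- an invariant integral on M
    (η : M →ₗ[k] k)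
    (hη : ∀ (a : H) (m : M), η (β a m) = Coalgebra.counit (R := k) a * η m) :
    ∀ (a : H) (f : F) (ψ : M),
      η (l (α a f) ψ) = η (l f (β (antipode (R := k) a) ψ)) ∧
      η (r f (β a ψ)) = η (r (α (antipode (R := k) a) f) ψ) := by
  intro a f ψ
  set R : Coalgebra.Repr k a (H × H) := Coalgebra.Repr.arbitrary k a with hR
  constructor
  · -- first part
    set R1 := fun i => reprFin.{u_6}
      (Coalgebra.Repr.arbitrary k (R.left i)) with hR1
    have key := key_tensor R R1 (fun i => Coalgebra.Repr.arbitrary k (R.right i))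
    let B1 : H →ₗ[k] H →ₗ[k] k := LinearMap.mk₂ k (fun x y => η (l (α x f) (β y ψ)))
      (fun x x' y => by simp [map_add, LinearMap.add_apply])
      (fun c x y => by simp [map_smul, LinearMap.smul_apply, smul_eq_mul])
      (fun x y y' => by simp [map_add, LinearMap.add_apply])
      (fun c x y => by simp [map_smul, LinearMap.smul_apply, smul_eq_mul])
    have hG := congrArg (TensorProduct.lift B1) key
    simp only [map_sum, TensorProduct.lift.tmul, LinearMap.mk₂_apply, B1] at hG
    -- hG : ∑ i ∑ j, η (l (α ((R1 i).left j) f) (β ((R1 i).right j * S (R.right i)) ψ))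
    --        = η (l (α a f) (β 1 ψ))
    rw [map_one] at hG
    have step1 : η (l f (β (antipode (R := k) a) ψ))
        = ∑ i ∈ R.index, Coalgebra.counit (R := k) (R.left i)
            * η (l f (β (antipode (R := k) (R.right i)) ψ)) := by
      conv_lhs => rw [← aux_counit_left R]
      simp [map_sum, map_smul, LinearMap.sum_apply, LinearMap.smul_apply, smul_eq_mul]
    have step2 : ∀ i ∈ R.index,
        Coalgebra.counit (R := k) (R.left i) * η (l f (β (antipode (R := k) (R.right i)) ψ))
        = ∑ j ∈ (R1 i).index,
            η (l (α ((R1 i).left j) f)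
              (β ((R1 i).right j * antipode (R := k) (R.right i)) ψ)) := by
      intro i _
      rw [← hη, hl_equiv (R.left i) (R1 i), map_sum]
      refine Finset.sum_congr rfl fun j _ => ?_
      rw [map_mul, Module.End.mul_apply]
    rw [step1, Finset.sum_congr rfl step2, hG]
    simp only [Module.End.one_apply]
  · -- second part
    set R1 := fun i => reprFin.{u_7}
      (Coalgebra.Repr.arbitrary k (R.left i)) with hR1
    have key := key_tensor R R1 (fun i => Coalgebra.Repr.arbitrary k (R.right i))
    let B2 : H →ₗ[k] H →ₗ[k] k := LinearMap.mk₂ k (fun x y => η (r (α y f) (β x ψ)))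
      (fun x x' y => by simp [map_add, LinearMap.add_apply])
      (fun c x y => by simp [map_smul, LinearMap.smul_apply, smul_eq_mul])
      (fun x y y' => by simp [map_add, LinearMap.add_apply])
      (fun c x y => by simp [map_smul, LinearMap.smul_apply, smul_eq_mul])
    have hG := congrArg (TensorProduct.lift B2) key
    simp only [map_sum, TensorProduct.lift.tmul, LinearMap.mk₂_apply, B2] at hG
    rw [map_one] at hG
    have step1 : η (r (α (antipode (R := k) a) f) ψ)
        = ∑ i ∈ R.index, Coalgebra.counit (R := k) (R.left i)
            * η (r (α (antipode (R := k) (R.right i)) f) ψ) := by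
      conv_lhs => rw [← aux_counit_left R]
      simp [map_sum, map_smul, LinearMap.sum_apply, LinearMap.smul_apply, smul_eq_mul]
    have step2 : ∀ i ∈ R.index,
        Coalgebra.counit (R := k) (R.left i) * η (r (α (antipode (R := k) (R.right i)) f) ψ)
        = ∑ j ∈ (R1 i).index,
            η (r (α ((R1 i).right j * antipode (R := k) (R.right i)) f)
              (β ((R1 i).left j) ψ)) := by
      intro i _
      rw [← hη, hr_equiv (R.left i) (R1 i), map_sum]
      refine Finset.sum_congr rfl fun j _ => ?_
      rw [map_mul, Module.End.mul_apply]
    rw [step1, Finset.sum_congr rfl step2, hG]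
    simp only [Module.End.one_apply, map_one]
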